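/- Let a_1, ..., a_m ∈ ℝ^d have a unique Delaunay triangulation (i.e., for every Delaunay cell with vertex index set S there exist c and r with ‖a_j - c‖ = r for j ∈ S and ‖a_j - c‖ > r for j ∉ S). If y lies in the convex hull of a_1,...,a_m, then the minimizer x of the weighted ℓ1 program min Σ_j x_j ‖y - a_j‖² subject to y = Σ_j x_j a_j, Σ_j x_j = 1, x_j ≥ 0 has support contained in the vertex set of every Delaunay cell containing y; consequently {a_j : x_j ≠ 0} are vertices of a face of the triangulation containing y. -/

import Mathlib

theorem stmt_5 {d m : ℕ} (a : Fin m → EuclideanSpace ℝ (Fin d))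
    (y : EuclideanSpace ℝ (Fin d))
    (hy : y ∈ convexHull ℝ (Set.range a))
    (x : Fin m → ℝ)
    (hx : (∀ j, 0 ≤ x j) ∧ ∑ j, x j = 1 ∧ ∑ j, x j • a j = y)
    (hmin : ∀ z : Fin m → ℝ, ((∀ j, 0 ≤ z j) ∧ ∑ j, z j = 1 ∧ ∑ j, z j • a j = y) →
      ∑ j, x j * ‖y - a j‖ ^ 2 ≤ ∑ j, z j * ‖y - a j‖ ^ 2) :
    ∀ S : Finset (Fin m), ∀ c : EuclideanSpace ℝ (Fin d), ∀ r : ℝ, 0 < r →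
      (∀ j ∈ S, ‖a j - c‖ = r) → (∀ j ∉ S, r < ‖a j - c‖) →
      y ∈ convexHull ℝ (a '' S) →
      ∀ j, x j ≠ 0 → j ∈ S := by
  classical
  intro S c r hr hS hnotS hyS j0 hxj0
  obtain ⟨hxpos, hxsum, hxcomb⟩ := hx
  -- Key identity: for any feasible weights w,
  -- ∑ w j * ‖y - a j‖² = ∑ w j * ‖a j - c‖² + K, with K independent of w.
  set K : ℝ := ‖y‖ ^ 2 - ‖c‖ ^ 2 - 2 * (inner ℝ (y - c) y : ℝ) with hK
  have key : ∀ w : Fin m → ℝ, ∑ j, w j = 1 → ∑ j, w j • a j = y →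
      ∑ j, w j * ‖y - a j‖ ^ 2 = ∑ j, w j * ‖a j - c‖ ^ 2 + K := by
    intro w hw1 hwc
    have hpt : ∀ j, ‖y - a j‖ ^ 2 =
        ‖a j - c‖ ^ 2 + (‖y‖ ^ 2 - ‖c‖ ^ 2) - 2 * (inner ℝ (y - c) (a j) : ℝ) := by
      intro j
      have h1 : ‖y - a j‖ ^ 2 = ‖y‖ ^ 2 - 2 * (inner ℝ y (a j) : ℝ) + ‖a j‖ ^ 2 :=
        norm_sub_sq_real y (a j)
      have h2 : ‖a j - c‖ ^ 2 = ‖a j‖ ^ 2 - 2 * (inner ℝ (a j) c : ℝ) + ‖c‖ ^ 2 :=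
        norm_sub_sq_real (a j) c
      have h3 : (inner ℝ (y - c) (a j) : ℝ) = inner ℝ y (a j) - inner ℝ c (a j) :=
        inner_sub_left _ _ _
      have h4 : (inner ℝ (a j) c : ℝ) = inner ℝ c (a j) := real_inner_comm _ _
      rw [h1, h2, h3, h4]; ring
    have hsum : ∑ j, w j * (inner ℝ (y - c) (a j) : ℝ) = (inner ℝ (y - c) y : ℝ) := by
      rw [← hwc, inner_sum]
      exact Finset.sum_congr rfl fun j _ => (real_inner_smul_right _ _ _).symm
    calc ∑ j, w j * ‖y - a j‖ ^ 2
        = ∑ j, (w j * ‖a j - c‖ ^ 2 + w j * (‖y‖ ^ 2 - ‖c‖ ^ 2)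
            - 2 * (w j * (inner ℝ (y - c) (a j) : ℝ))) := by
          refine Finset.sum_congr rfl fun j _ => ?_
          rw [hpt j]; ring
      _ = ∑ j, w j * ‖a j - c‖ ^ 2 + (∑ j, w j) * (‖y‖ ^ 2 - ‖c‖ ^ 2)
            - 2 * ∑ j, w j * (inner ℝ (y - c) (a j) : ℝ) := by
          rw [Finset.sum_sub_distrib, Finset.sum_add_distrib, ← Finset.sum_mul,
            ← Finset.mul_sum]
      _ = ∑ j, w j * ‖a j - c‖ ^ 2 + K := by
          rw [hw1, hsum, hK]; ring
  -- Build a feasible vector supported on S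
  have himg : a '' (S : Set (Fin m)) = Set.range fun i : S => a (i : Fin m) :=
    Set.image_eq_range _ _
  rw [himg, convexHull_range_eq_exists_affineCombination] at hyS
  obtain ⟨s, w, hw0, hw1, hwy⟩ := hyS
  rw [Finset.affineCombination_eq_linear_combination _ _ _ hw1] at hwy
  set z : Fin m → ℝ := fun j => ∑ i ∈ s.filter (fun i : S => (i : Fin m) = j), w i with hz
  have hz0 : ∀ j, 0 ≤ z j := fun j =>
    Finset.sum_nonneg fun i hi => hw0 i (Finset.mem_filter.1 hi).1
  have hz1 : ∑ j, z j = 1 := by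
    rw [hz]; simpa using (Finset.sum_fiberwise s (fun i : S => (i : Fin m)) w).trans hw1
  have hzgen : ∀ f : Fin m → ℝ, ∑ j, z j * f j = ∑ i ∈ s, w i * f (i : Fin m) := by
    intro f
    rw [hz]
    rw [← Finset.sum_fiberwise s (fun i : S => (i : Fin m)) (fun i => w i * f (i : Fin m))]
    refine Finset.sum_congr rfl fun j _ => ?_
    rw [Finset.sum_mul]
    refine Finset.sum_congr rfl fun i hi => ?_
    rw [(Finset.mem_filter.1 hi).2]
  have hzgen' : ∀ f : Fin m → EuclideanSpace ℝ (Fin d),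
      ∑ j, z j • f j = ∑ i ∈ s, w i • f (i : Fin m) := by
    intro f
    rw [hz]
    rw [← Finset.sum_fiberwise s (fun i : S => (i : Fin m)) (fun i => w i • f (i : Fin m))]
    refine Finset.sum_congr rfl fun j _ => ?_
    rw [Finset.sum_smul]
    refine Finset.sum_congr rfl fun i hi => ?_
    rw [(Finset.mem_filter.1 hi).2]
  have hzc : ∑ j, z j • a j = y := by rw [hzgen', hwy]
  -- ∑ z j * ‖a j - c‖² = r²
  have hzr : ∑ j, z j * ‖a j - c‖ ^ 2 = r ^ 2 := by
    rw [hzgen]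
    have : ∀ i ∈ s, w i * ‖a (i : Fin m) - c‖ ^ 2 = w i * r ^ 2 := fun i _ => by
      rw [hS (i : Fin m) i.2]
    rw [Finset.sum_congr rfl this, ← Finset.sum_mul, hw1, one_mul]
  -- Minimality gives ∑ x j * ‖a j - c‖² ≤ r²
  have hle : ∑ j, x j * ‖a j - c‖ ^ 2 ≤ r ^ 2 := by
    have h := hmin z ⟨hz0, hz1, hzc⟩
    rw [key x hxsum hxcomb, key z hz1 hzc, hzr] at h
    linarith
  -- Strict inequality from j0 ∉ S
  by_contra hj0S
  have hxj0' : 0 < x j0 := lt_of_le_of_ne (hxpos j0) (Ne.symm hxj0)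
  have hstrict : r ^ 2 < ∑ j, x j * ‖a j - c‖ ^ 2 := by
    have h1 : ∑ j, x j * r ^ 2 = r ^ 2 := by rw [← Finset.sum_mul, hxsum, one_mul]
    rw [← h1]
    refine Finset.sum_lt_sum (fun i _ => ?_) ⟨j0, Finset.mem_univ j0, ?_⟩
    · rcases le_or_gt r ‖a i - c‖ with h | h
      · exact mul_le_mul_of_nonneg_left (pow_le_pow_left₀ hr.le h 2) (hxpos i)
      · exact absurd (hS i (by by_contra hi; exact absurd h (not_lt.2 (hnotS i hi).le)))
          (by intro he; rw [he] at h; exact lt_irrefl r h)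
    · have h := hnotS j0 hj0S
      exact mul_lt_mul_of_pos_left (by nlinarith) hxj0'
  linarith
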